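/- The reduced Burau representation of the braid group B_3 is faithful: the group homomorphism ρ3 : B_3 → GL(2, ℤ[q^{±1}]) determined by σ1 ↦ [[-q, q], [0, 1]] and σ2 ↦ [[1, 0], [1, -q]] is injective. -/

import Mathlib

/-- The braid relation for the braid group `B₃` on generators `σ₁ = of 0`, `σ₂ = of 1`:
`σ₁σ₂σ₁ = σ₂σ₁σ₂`. -/
def braidRels3 : Set (FreeGroup (Fin 2)) :=
  {FreeGroup.of 0 * FreeGroup.of 1 * FreeGroup.of 0 *
    (FreeGroup.of 1 * FreeGroup.of 0 * FreeGroup.of 1)⁻¹}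

/-- The braid group `B₃` as a presented group. -/
abbrev BraidGroup3 : Type := PresentedGroup braidRels3

/-- The standard generators `σ₁, σ₂` of `B₃`. -/
def σ₃ (i : Fin 2) : BraidGroup3 := PresentedGroup.of i

open LaurentPolynomial in
/-- The variable `q` of the ring of Laurent polynomials `ℤ[q^{±1}]`. -/
noncomputable def q : LaurentPolynomial ℤ := LaurentPolynomial.T 1

namespace BurauB3

open Monoid Multiplicative LaurentPolynomial

noncomputable section

/-! ### Evaluation of Laurent polynomials at `-1` -/

/-- Evaluation of an integral Laurent polynomial at `-1`, as a ring hom to `ℝ`. -/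
def ev : LaurentPolynomial ℤ →+* ℝ :=
  ((AddMonoidAlgebra.lift ℤ ℝ ℤ) ((Units.coeHom ℝ).comp (zpowersHom ℝˣ (-1)))).toRingHom

lemma ev_T (n : ℤ) : ev (T n) = (-1 : ℝ) ^ n := by
  show ((AddMonoidAlgebra.lift ℤ ℝ ℤ) ((Units.coeHom ℝ).comp (zpowersHom ℝˣ (-1)))) (T n)
      = (-1 : ℝ) ^ n
  rw [T, AddMonoidAlgebra.lift_single]
  simp

lemma ev_q : ev q = -1 := by rw [q, ev_T]; simp

lemma T_eq_one_iff {m : ℤ} : (T m : LaurentPolynomial ℤ) = 1 ↔ m = 0 := by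
  constructor
  · intro h
    have h' : (AddMonoidAlgebra.single m 1 : LaurentPolynomial ℤ) = AddMonoidAlgebra.single 0 1 := h
    simpa using AddMonoidAlgebra.single_left_injective one_ne_zero h'
  · rintro rfl; exact T_zero

def homOfOrder {G : Type*} [Group G] (n : ℕ) (g : G) (h : g ^ (n : ℤ) = 1) :
    Multiplicative (ZMod n) →* G :=
  AddMonoidHom.toMultiplicativeLeft (ZMod.lift n ⟨MonoidHom.toAdditiveRight (zpowersHom G g), by
    exact h⟩)

lemma homOfOrder_intCast {G : Type*} [Group G] (n : ℕ) (g : G) (h : g ^ (n:ℤ) = 1) (k : ℤ) :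
    homOfOrder n g h (Multiplicative.ofAdd ((k : ZMod n))) = g ^ k := by
  simp [homOfOrder, ZMod.lift_coe]

/-! ### Elements of the braid group -/

def a : BraidGroup3 := σ₃ 0
def b : BraidGroup3 := σ₃ 1
def x : BraidGroup3 := a * b * a
def y : BraidGroup3 := a * b
/-- The full twist, generating the center. -/
def c : BraidGroup3 := x ^ 2

lemma braid_rel : a * b * a = b * a * b := by
  have h : PresentedGroup.mk braidRels3 (FreeGroup.of 0 * FreeGroup.of 1 * FreeGroup.of 0 *
      (FreeGroup.of 1 * FreeGroup.of 0 * FreeGroup.of 1)⁻¹) = 1 := by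
    apply (QuotientGroup.eq_one_iff _).mpr
    exact Subgroup.subset_normalClosure rfl
  simp only [map_mul, map_inv] at h
  rw [mul_inv_eq_one] at h
  exact h

lemma x_mul_a : x * a = b * x := by
  show a * b * a * a = b * (a * b * a)
  conv_lhs => rw [braid_rel]
  group

lemma x_mul_b : x * b = a * x := by
  show a * b * a * b = a * (a * b * a)
  conv_rhs => rw [braid_rel]
  group

lemma c_comm_a : Commute a c := by
  show a * (x * x) = x * x * a
  rw [← mul_assoc, ← x_mul_b, mul_assoc, ← x_mul_a, ← mul_assoc]

lemma c_comm_b : Commute b c := by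
  show b * (x * x) = x * x * b
  rw [← mul_assoc, ← x_mul_a, mul_assoc, ← x_mul_b, ← mul_assoc]

lemma c_central (g : BraidGroup3) : Commute g c := by
  have hg : g ∈ Subgroup.closure (Set.range (σ₃)) := by
    rw [show Set.range σ₃ = Set.range (PresentedGroup.of (rels := braidRels3)) from rfl,
      PresentedGroup.closure_range_of]
    trivial
  induction hg using Subgroup.closure_induction with
  | mem z hz =>
    obtain ⟨i, rfl⟩ := hz
    fin_cases i
    · exact c_comm_a
    · exact c_comm_b
  | one => exact Commute.one_left c
  | mul u v hu hv hcu hcv => exact hcu.mul_left hcv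
  | inv u hu hcu => exact hcu.inv_left

lemma y_cube : y ^ 3 = c :=
  calc y ^ 3 = (a * b * a) * (b * a * b) := by rw [y, pow_succ, pow_two]; group
    _ = x * x := by rw [← braid_rel]; rfl
    _ = c := (pow_two x).symm

/-! ### The center subgroup and quotient -/

def Z : Subgroup BraidGroup3 := Subgroup.zpowers c

instance Z_normal : (Z).Normal := by
  constructor
  intro n hn g
  obtain ⟨k, rfl⟩ := Subgroup.mem_zpowers_iff.mp hn
  have : g * c ^ k * g⁻¹ = c ^ k := by
    rw [((c_central g).zpow_right k).eq, mul_assoc, mul_inv_cancel, mul_one]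
  rw [this]
  exact Subgroup.zpow_mem _ (Subgroup.mem_zpowers c) k

abbrev Q3 : Type := BraidGroup3 ⧸ Z

def π : BraidGroup3 →* Q3 := QuotientGroup.mk' Z

lemma π_c : π c = 1 := by
  rw [π, QuotientGroup.mk'_apply, QuotientGroup.eq_one_iff]
  exact Subgroup.mem_zpowers c

/-! ### The free product `C₂ * C₃` -/

abbrev Hfam (i : Fin 2) : Type := Multiplicative (ZMod (2 + i.val))

abbrev FP : Type := Monoid.CoprodI Hfam

def s : FP := Monoid.CoprodI.of (M := Hfam) (i := 0) (Multiplicative.ofAdd (1 : ZMod 2))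

def u : FP := Monoid.CoprodI.of (M := Hfam) (i := 1) (Multiplicative.ofAdd (1 : ZMod 3))

lemma s_sq : s ^ 2 = 1 := by
  rw [s, ← map_pow]
  have : (Multiplicative.ofAdd (1 : ZMod 2) : Hfam 0) ^ 2 = 1 := by decide
  rw [this, map_one]

lemma u_cube : u ^ 3 = 1 := by
  rw [u, ← map_pow]
  have : (Multiplicative.ofAdd (1 : ZMod 3) : Hfam 1) ^ 3 = 1 := by decide
  rw [this, map_one]

lemma s_inv : s⁻¹ = s := by
  have : s * s = 1 := by rw [← pow_two]; exact s_sq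
  exact inv_eq_of_mul_eq_one_left this

/-- The projection `B₃ → C₂ * C₃`. -/
def ψ : BraidGroup3 →* FP :=
  PresentedGroup.toGroup (f := ![u⁻¹ * s, s⁻¹ * u ^ 2]) (by
    intro r hr
    rw [braidRels3, Set.mem_singleton_iff] at hr
    subst hr
    simp only [map_mul, map_inv, FreeGroup.lift_apply_of]
    rw [mul_inv_eq_one]
    show (u⁻¹ * s) * (s⁻¹ * u ^ 2) * (u⁻¹ * s) = (s⁻¹ * u ^ 2) * (u⁻¹ * s) * (s⁻¹ * u ^ 2)
    have key : s⁻¹ * u ^ 3 = s := by rw [u_cube, mul_one, s_inv]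
    calc (u⁻¹ * s) * (s⁻¹ * u ^ 2) * (u⁻¹ * s) = s := by group
      _ = s⁻¹ * u ^ 3 := key.symm
      _ = (s⁻¹ * u ^ 2) * (u⁻¹ * s) * (s⁻¹ * u ^ 2) := by group)

lemma ψ_a : ψ a = u⁻¹ * s := by
  show ψ (σ₃ 0) = _
  exact PresentedGroup.toGroup.of _

lemma ψ_b : ψ b = s⁻¹ * u ^ 2 := by
  show ψ (σ₃ 1) = _
  exact PresentedGroup.toGroup.of _

/-- The homomorphism `C₂ * C₃ → B₃/Z`. -/
def χ : FP →* Q3 :=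
  Monoid.CoprodI.lift (fun i => by
    refine Fin.cases (motive := fun i => Hfam i →* Q3) ?_ (fun j => ?_) i
    · exact homOfOrder 2 (π x) (by rw [zpow_natCast, ← map_pow, ← c, π_c])
    · refine Fin.cases (motive := fun j => Hfam j.succ →* Q3) ?_ (fun k => k.elim0) j
      exact homOfOrder 3 (π y) (by rw [zpow_natCast, ← map_pow, y_cube, π_c]))

lemma χ_s : χ s = π x := by
  rw [χ, s, Monoid.CoprodI.lift_of]
  have h := homOfOrder_intCast 2 (π x) (by rw [zpow_natCast, ← map_pow, ← c, π_c]) 1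
  rw [zpow_one] at h
  exact h

lemma χ_u : χ u = π y := by
  rw [χ, u, Monoid.CoprodI.lift_of]
  have h := homOfOrder_intCast 3 (π y) (by rw [zpow_natCast, ← map_pow, y_cube, π_c]) 1
  rw [zpow_one] at h
  exact h

lemma χ_ψ : χ.comp ψ = π := by
  apply PresentedGroup.ext
  intro i
  fin_cases i
  · show χ (ψ a) = π (σ₃ 0)
    rw [ψ_a, map_mul, map_inv, χ_u, χ_s, ← map_inv, ← map_mul]
    congr 1
    show y⁻¹ * x = a
    rw [x, y]; group
  · show χ (ψ b) = π (σ₃ 1)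
    rw [ψ_b, map_mul, map_inv, map_pow, χ_u, χ_s, ← map_inv, ← map_pow, ← map_mul]
    congr 1
    show x⁻¹ * y ^ 2 = b
    rw [x, y, pow_two]; group

lemma psi_eq_one {g : BraidGroup3} (h : ψ g = 1) : ∃ k : ℤ, g = c ^ k := by
  have : π g = 1 := by rw [← χ_ψ]; simpa using congrArg χ h
  rw [π, QuotientGroup.mk'_apply, QuotientGroup.eq_one_iff] at this
  obtain ⟨k, hk⟩ := Subgroup.mem_zpowers_iff.mp this
  exact ⟨k, hk.symm⟩

/-! ### Ping-pong on the projective line -/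

abbrev P2 : Type := Projectivization ℝ (Fin 2 → ℝ)

lemma toLin'_inj (g : GL (Fin 2) ℝ) :
    Function.Injective (Matrix.toLin' (g : Matrix (Fin 2) (Fin 2) ℝ)) := by
  have : Function.LeftInverse (Matrix.toLin' ((g⁻¹ : GL (Fin 2) ℝ) : Matrix (Fin 2) (Fin 2) ℝ))
      (Matrix.toLin' (g : Matrix (Fin 2) (Fin 2) ℝ)) := by
    intro v
    rw [← Matrix.toLin'_mul_apply, ← Units.val_mul, inv_mul_cancel, Units.val_one,
      Matrix.toLin'_one]
    rfl
  exact this.injective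

def pmap (g : GL (Fin 2) ℝ) : P2 → P2 :=
  Projectivization.map (Matrix.toLin' (g : Matrix (Fin 2) (Fin 2) ℝ)) (toLin'_inj g)

lemma pmap_congr' {f g : (Fin 2 → ℝ) →ₗ[ℝ] (Fin 2 → ℝ)} (hf : Function.Injective f)
    (h : f = g) : Projectivization.map f hf = Projectivization.map g (h ▸ hf) := by
  subst h; rfl

lemma pmap_mul (g h : GL (Fin 2) ℝ) : pmap (g * h) = pmap g ∘ pmap h := by
  unfold pmap
  rw [← Projectivization.map_comp]
  exact pmap_congr' _ (by rw [Units.val_mul, Matrix.toLin'_mul])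

lemma pmap_one : pmap (1 : GL (Fin 2) ℝ) = id := by
  unfold pmap
  rw [← Projectivization.map_id (K := ℝ) (V := Fin 2 → ℝ)]
  exact pmap_congr' _ (by rw [Units.val_one, Matrix.toLin'_one])

def glPerm : GL (Fin 2) ℝ →* Equiv.Perm P2 where
  toFun g := ⟨pmap g, pmap g⁻¹, by
      intro p
      rw [← Function.comp_apply (f := pmap g⁻¹), ← pmap_mul, inv_mul_cancel, pmap_one, id_eq], by
      intro p
      rw [← Function.comp_apply (f := pmap g), ← pmap_mul, mul_inv_cancel, pmap_one, id_eq]⟩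
  map_one' := by ext p; simp [pmap_one]
  map_mul' g h := by ext p; simp [pmap_mul]

lemma glPerm_apply (g : GL (Fin 2) ℝ) (p : P2) : glPerm g p = pmap g p := rfl

lemma pmap_mk (g : GL (Fin 2) ℝ) (v : Fin 2 → ℝ) (hv : v ≠ 0)
    (hv' : (g : Matrix (Fin 2) (Fin 2) ℝ).mulVec v ≠ 0) :
    pmap g (Projectivization.mk ℝ v hv) =
      Projectivization.mk ℝ ((g : Matrix (Fin 2) (Fin 2) ℝ).mulVec v) hv' := by
  unfold pmap
  rw [Projectivization.map_mk]
  congr 1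

lemma glPerm_scalar (g : GL (Fin 2) ℝ) (r : ℝ) (hr : r ≠ 0)
    (hg : (g : Matrix (Fin 2) (Fin 2) ℝ) = r • (1 : Matrix (Fin 2) (Fin 2) ℝ)) :
    glPerm g = 1 := by
  ext p
  induction p using Projectivization.ind with
  | h v hv =>
    have hv' : (g : Matrix (Fin 2) (Fin 2) ℝ).mulVec v = r • v := by
      rw [hg, Matrix.smul_mulVec, Matrix.one_mulVec]
    rw [Equiv.Perm.coe_one, id_eq, glPerm_apply, pmap_mk g v hv (by
      rw [hv']; exact smul_ne_zero hr hv)]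
    rw [Projectivization.mk_eq_mk_iff]
    exact ⟨Units.mk0 r hr, by simp [hv', Units.smul_def]⟩

lemma vne (r : ℝ) : ![r, (1:ℝ)] ≠ 0 := fun h => one_ne_zero (congrFun h 1)

def Ppos : Set P2 :=
  {p | ∃ r : ℝ, Irrational r ∧ 0 < r ∧ p = Projectivization.mk ℝ ![r, 1] (vne r)}

def Nneg : Set P2 :=
  {p | ∃ r : ℝ, Irrational r ∧ r < 0 ∧ p = Projectivization.mk ℝ ![r, 1] (vne r)}

lemma mk_slope_inj {r r' : ℝ}
    (h : Projectivization.mk ℝ ![r, 1] (vne r) = Projectivization.mk ℝ ![r', 1] (vne r')) :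
    r = r' := by
  rw [Projectivization.mk_eq_mk_iff] at h
  obtain ⟨a, ha⟩ := h
  have h1 := congrFun ha 1
  have h0 := congrFun ha 0
  simp [Units.smul_def] at h1 h0
  rw [h1] at h0
  simpa using h0.symm

lemma disj_PN : Disjoint Ppos Nneg := by
  rw [Set.disjoint_left]
  rintro p ⟨r, hirr, hpos, rfl⟩ ⟨r', hirr', hneg, heq⟩
  have := mk_slope_inj heq
  linarith

lemma glPerm_slope (g : GL (Fin 2) ℝ) (r t : ℝ)
    (h2 : ((g : Matrix (Fin 2) (Fin 2) ℝ).mulVec ![r, 1]) 1 ≠ 0)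
    (h1 : ((g : Matrix (Fin 2) (Fin 2) ℝ).mulVec ![r, 1]) 0 =
      (((g : Matrix (Fin 2) (Fin 2) ℝ).mulVec ![r, 1]) 1) * t) :
    glPerm g (Projectivization.mk ℝ ![r, 1] (vne r)) =
      Projectivization.mk ℝ ![t, 1] (vne t) := by
  rw [glPerm_apply, pmap_mk g _ (vne r) (fun hz => h2 (by rw [hz]; rfl))]
  rw [Projectivization.mk_eq_mk_iff]
  refine ⟨Units.mk0 _ h2, funext fun i => ?_⟩
  fin_cases i
  · simpa [Units.smul_def] using h1.symm
  · simp [Units.smul_def]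

/-! ### The ping-pong argument -/

section PingPong

variable (S' U' : GL (Fin 2) ℝ)
  (hS' : (S' : Matrix (Fin 2) (Fin 2) ℝ) = !![0, -1; 1, 0])
  (hU' : (U' : Matrix (Fin 2) (Fin 2) ℝ) = !![0, -1; 1, 1])

include hS' in
lemma S_order : glPerm S' ^ ((2:ℕ) : ℤ) = 1 := by
  rw [zpow_natCast, ← map_pow]
  refine glPerm_scalar _ (-1) (by norm_num) ?_
  rw [Units.val_pow_eq_pow_val, hS', pow_two, Matrix.mul_fin_two]
  ext i j
  fin_cases i <;> fin_cases j <;> simp [Matrix.one_apply] <;> ring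

include hU' in
lemma U_order : glPerm U' ^ ((3:ℕ) : ℤ) = 1 := by
  rw [zpow_natCast, ← map_pow]
  refine glPerm_scalar _ (-1) (by norm_num) ?_
  rw [Units.val_pow_eq_pow_val, hU', pow_succ, pow_two, Matrix.mul_fin_two, Matrix.mul_fin_two]
  ext i j
  fin_cases i <;> fin_cases j <;> simp [Matrix.one_apply] <;> ring

include hU' in
lemma U_sq : ((U' ^ 2 : GL (Fin 2) ℝ) : Matrix (Fin 2) (Fin 2) ℝ) = !![-1, -1; 1, 0] := by
  rw [Units.val_pow_eq_pow_val, hU', pow_two, Matrix.mul_fin_two]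
  ext i j
  fin_cases i <;> fin_cases j <;> simp <;> ring

/-- The pair of homomorphisms `C₂ → Perm(ℙ¹)`, `C₃ → Perm(ℙ¹)`. -/
def Fperm (hS : glPerm S' ^ ((2:ℕ) : ℤ) = 1) (hU : glPerm U' ^ ((3:ℕ) : ℤ) = 1) :
    ∀ i, Hfam i →* Equiv.Perm P2 := fun i => by
  refine Fin.cases (motive := fun i => Hfam i →* Equiv.Perm P2) ?_ (fun j => ?_) i
  · exact homOfOrder 2 (glPerm S') hS
  · refine Fin.cases (motive := fun j => Hfam j.succ →* Equiv.Perm P2) ?_ (fun k => k.elim0) j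
    exact homOfOrder 3 (glPerm U') hU

variable (hS : glPerm S' ^ ((2:ℕ) : ℤ) = 1) (hU : glPerm U' ^ ((3:ℕ) : ℤ) = 1)

lemma Fperm_s : Monoid.CoprodI.lift (Fperm S' U' hS hU) s = glPerm S' := by
  rw [s, Monoid.CoprodI.lift_of]
  have h := homOfOrder_intCast 2 (glPerm S') hS 1
  rw [zpow_one] at h
  exact h

lemma Fperm_u : Monoid.CoprodI.lift (Fperm S' U' hS hU) u = glPerm U' := by
  rw [u, Monoid.CoprodI.lift_of]
  have h := homOfOrder_intCast 3 (glPerm U') hU 1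
  rw [zpow_one] at h
  exact h

include hS' hU' in
open Pointwise in
lemma Fperm_inj : Function.Injective (Monoid.CoprodI.lift (Fperm S' U' hS hU)) := by
  apply Monoid.CoprodI.lift_injective_of_ping_pong (Fperm S' U' hS hU)
    (Or.inr ⟨1, by simp [Cardinal.mk_fintype]⟩) ![Ppos, Nneg]
  · -- nonempty
    intro i
    fin_cases i
    · exact ⟨_, ⟨Real.sqrt 2, irrational_sqrt_two, by positivity, rfl⟩⟩
    · exact ⟨_, ⟨-Real.sqrt 2, irrational_sqrt_two.neg, by
        have : (0:ℝ) < Real.sqrt 2 := by positivity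
        linarith, rfl⟩⟩
  · -- disjoint
    intro i j hij
    fin_cases i <;> fin_cases j
    · exact absurd rfl hij
    · exact disj_PN
    · exact disj_PN.symm
    · exact absurd rfl hij
  · -- ping pong
    have h01 : ∀ i : Fin 2, i = 0 ∨ i = 1 := by decide
    intro i j hij
    rcases h01 i with rfl | rfl <;> rcases h01 j with rfl | rfl
    · exact absurd rfl hij
    · -- C₂ moves Nneg into Ppos
      intro h hne
      have hh : ∀ h' : Multiplicative (ZMod 2), h' ≠ 1 →
          h' = Multiplicative.ofAdd (((1:ℤ) : ZMod 2)) := by decide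
      have hh' := hh h hne
      subst hh'
      show (Fperm S' U' hS hU 0) _ • Nneg ⊆ Ppos
      have hF : (Fperm S' U' hS hU 0)
          ((Multiplicative.ofAdd ((1:ℤ) : ZMod 2) : Multiplicative (ZMod 2)))
          = glPerm S' := by
        have h := homOfOrder_intCast 2 (glPerm S') hS 1
        rw [zpow_one] at h
        exact h
      rw [hF]
      rintro p' hp'
      rw [Set.mem_smul_set] at hp'
      obtain ⟨p, hp, rfl⟩ := hp'
      obtain ⟨r, hirr, hneg, rfl⟩ := hp
      have hr0 : r ≠ 0 := hirr.ne_zero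
      rw [Equiv.Perm.smul_def, glPerm_slope S' r (-r⁻¹)
        (by simp [hS', Matrix.mulVec, dotProduct, Fin.sum_univ_two, hr0])
        (by simp [hS', Matrix.mulVec, dotProduct, Fin.sum_univ_two]; field_simp)]
      exact ⟨-r⁻¹, hirr.inv.neg, by
        have : r⁻¹ < 0 := inv_lt_zero.mpr hneg
        linarith, rfl⟩
    · -- C₃ moves Ppos into Nneg
      intro h hne
      have hh0 : ∀ h' : Multiplicative (ZMod 3), h' ≠ 1 →
          h' = Multiplicative.ofAdd (((1:ℤ) : ZMod 3)) ∨
          h' = Multiplicative.ofAdd (((2:ℤ) : ZMod 3)) := by decide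
      have hh := hh0 h hne
      show (Fperm S' U' hS hU 1) _ • Ppos ⊆ Nneg
      rcases hh with hh | hh <;> subst hh
      · have hF : (Fperm S' U' hS hU 1) (Multiplicative.ofAdd ((1:ℤ) : ZMod 3))
            = glPerm U' := by
          have h := homOfOrder_intCast 3 (glPerm U') hU 1
          rw [zpow_one] at h
          exact h
        refine le_trans (le_of_eq (congrArg (· • Ppos) hF)) ?_
        
        rintro p' hp'
        rw [Set.mem_smul_set] at hp'
        obtain ⟨p, hp, rfl⟩ := hp'
        obtain ⟨r, hirr, hpos, rfl⟩ := hp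
        have hr1 : r + 1 ≠ 0 := by linarith
        rw [Equiv.Perm.smul_def, glPerm_slope U' r (-(r+1)⁻¹)
          (by simp [hU', Matrix.mulVec, dotProduct, Fin.sum_univ_two]; intro hc; linarith)
          (by simp [hU', Matrix.mulVec, dotProduct, Fin.sum_univ_two]; field_simp)]
        refine ⟨-(r+1)⁻¹, ?_, ?_, rfl⟩
        · have : Irrational (r + 1) := by simpa using hirr.add_intCast 1
          exact this.inv.neg
        · have : 0 < (r+1)⁻¹ := by positivity
          linarith
      · have hF : (Fperm S' U' hS hU 1) (Multiplicative.ofAdd ((2:ℤ) : ZMod 3))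
            = glPerm U' ^ (2:ℤ) := homOfOrder_intCast 3 (glPerm U') hU 2
        rw [show (glPerm U') ^ (2:ℤ) = glPerm (U' ^ 2) by
          rw [show ((2:ℤ)) = ((2:ℕ):ℤ) from rfl, zpow_natCast, map_pow]] at hF
        refine le_trans (le_of_eq (congrArg (· • Ppos) hF)) ?_
        rintro p' hp'
        rw [Set.mem_smul_set] at hp'
        obtain ⟨p, hp, rfl⟩ := hp'
        obtain ⟨r, hirr, hpos, rfl⟩ := hp
        have hr0 : r ≠ 0 := hirr.ne_zero
        rw [Equiv.Perm.smul_def, glPerm_slope (U' ^ 2) r (-1 - r⁻¹)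
          (by simp [U_sq U' hU', Matrix.mulVec, dotProduct, Fin.sum_univ_two, hr0])
          (by simp [U_sq U' hU', Matrix.mulVec, dotProduct, Fin.sum_univ_two]
              field_simp; ring)]
        refine ⟨-1 - r⁻¹, ?_, ?_, rfl⟩
        · have h' : Irrational (1 + r⁻¹) := by simpa using hirr.inv.intCast_add 1
          rw [show (-1 - r⁻¹ : ℝ) = -(1 + r⁻¹) by ring]
          exact h'.neg
        · have : 0 < r⁻¹ := by positivity
          linarith
    · exact absurd rfl hij

end PingPong

/-! ### Mapping `GL₂` along the evaluation -/

def mapGL : GL (Fin 2) (LaurentPolynomial ℤ) →* GL (Fin 2) ℝ :=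
  Units.map (RingHom.toMonoidHom (RingHom.mapMatrix ev))

lemma mapGL_coe (g : GL (Fin 2) (LaurentPolynomial ℤ)) :
    ((mapGL g : GL (Fin 2) ℝ) : Matrix (Fin 2) (Fin 2) ℝ)
      = ((g : Matrix (Fin 2) (Fin 2) (LaurentPolynomial ℤ))).map ev := by
  rw [mapGL, Units.coe_map]
  rfl

end
end BurauB3

open BurauB3 LaurentPolynomial in
/-- the reduced Burau representation
`ρ3 : B₃ → GL(2, ℤ[q^{±1}])`, `σ₁ ↦ [[-q, q], [0, 1]]`, `σ₂ ↦ [[1, 0], [1, -q]]`,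
is injective. -/
theorem burau_B3_faithful
    (ρ3 : BraidGroup3 →* Matrix.GeneralLinearGroup (Fin 2) (LaurentPolynomial ℤ))
    (h1 : (ρ3 (σ₃ 0) : Matrix (Fin 2) (Fin 2) (LaurentPolynomial ℤ)) = !![-q, q; 0, 1])
    (h2 : (ρ3 (σ₃ 1) : Matrix (Fin 2) (Fin 2) (LaurentPolynomial ℤ)) = !![1, 0; 1, -q]) :
    Function.Injective ρ3 := by
  rw [injective_iff_map_eq_one]
  intro g hg
  -- matrices of x, y, c
  have hx : ((ρ3 x : Matrix.GeneralLinearGroup (Fin 2) (LaurentPolynomial ℤ))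
      : Matrix (Fin 2) (Fin 2) (LaurentPolynomial ℤ)) = !![0, -q^2; -q, 0] := by
    have hx' : ρ3 x = ρ3 (σ₃ 0) * ρ3 (σ₃ 1) * ρ3 (σ₃ 0) := by
      rw [x, map_mul, map_mul]; rfl
    rw [hx', Units.val_mul, Units.val_mul, h1, h2, Matrix.mul_fin_two, Matrix.mul_fin_two]
    ext i j
    fin_cases i <;> fin_cases j <;> simp <;> ring
  have hy : ((ρ3 y : Matrix.GeneralLinearGroup (Fin 2) (LaurentPolynomial ℤ))
      : Matrix (Fin 2) (Fin 2) (LaurentPolynomial ℤ)) = !![0, -q^2; 1, -q] := by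
    have hy' : ρ3 y = ρ3 (σ₃ 0) * ρ3 (σ₃ 1) := by rw [y, map_mul]; rfl
    rw [hy', Units.val_mul, h1, h2, Matrix.mul_fin_two]
    ext i j
    fin_cases i <;> fin_cases j <;> simp <;> ring
  have hc : ((ρ3 c : Matrix.GeneralLinearGroup (Fin 2) (LaurentPolynomial ℤ))
      : Matrix (Fin 2) (Fin 2) (LaurentPolynomial ℤ))
      = (q^3) • (1 : Matrix (Fin 2) (Fin 2) (LaurentPolynomial ℤ)) := by
    rw [c, map_pow, Units.val_pow_eq_pow_val, hx, pow_two, Matrix.mul_fin_two]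
    ext i j
    fin_cases i <;> fin_cases j <;> simp [Matrix.one_apply] <;> ring
  -- the real matrices
  have hS' : ((mapGL (ρ3 x) : GL (Fin 2) ℝ) : Matrix (Fin 2) (Fin 2) ℝ) = !![0, -1; 1, 0] := by
    rw [mapGL_coe, hx]
    ext i j
    fin_cases i <;> fin_cases j <;>
      simp [Matrix.map_apply, ev_q] <;> norm_num
  have hU' : ((mapGL (ρ3 y) : GL (Fin 2) ℝ) : Matrix (Fin 2) (Fin 2) ℝ) = !![0, -1; 1, 1] := by
    rw [mapGL_coe, hy]
    ext i j
    fin_cases i <;> fin_cases j <;>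
      simp [Matrix.map_apply, ev_q] <;> norm_num
  have hS := S_order (mapGL (ρ3 x)) hS'
  have hU := U_order (mapGL (ρ3 y)) hU'
  set θ := Monoid.CoprodI.lift (Fperm (mapGL (ρ3 x)) (mapGL (ρ3 y)) hS hU) with hθ
  -- the commuting square
  have hcomm : θ.comp ψ = glPerm.comp (mapGL.comp ρ3) := by
    apply PresentedGroup.ext
    have h01 : ∀ i : Fin 2, i = 0 ∨ i = 1 := by decide
    intro i
    rcases h01 i with rfl | rfl
    · show θ (ψ a) = glPerm (mapGL (ρ3 a))
      have hyx : y⁻¹ * x = a := by rw [x, y]; group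
      rw [ψ_a, map_mul, map_inv, Fperm_s, Fperm_u, ← hyx, map_mul, map_inv, map_mul, map_inv,
        map_mul, map_inv]
    · show θ (ψ b) = glPerm (mapGL (ρ3 b))
      have hxy : x⁻¹ * y ^ 2 = b := by rw [x, y, pow_two]; group
      rw [ψ_b, map_mul, map_inv, map_pow, Fperm_s, Fperm_u, ← hxy, map_mul, map_inv, map_pow,
        map_mul, map_inv, map_pow, map_mul, map_inv, map_pow]
  -- conclude ψ g = 1
  have hψg : ψ g = 1 := by
    apply Fperm_inj (mapGL (ρ3 x)) (mapGL (ρ3 y)) hS' hU' hS hU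
    have := DFunLike.congr_fun hcomm g
    simp only [MonoidHom.comp_apply] at this
    rw [map_one]
    rw [this, hg, map_one, map_one]
  obtain ⟨k, rfl⟩ := psi_eq_one hψg
  -- count the power
  have hnat : ρ3 (c ^ (k.natAbs : ℕ)) = 1 := by
    rcases Int.natAbs_eq k with hk | hk
    · rw [← zpow_natCast, ← hk]; exact hg
    · rw [← zpow_natCast, show ((k.natAbs : ℤ)) = -k from by omega, zpow_neg, map_inv, hg,
        inv_one]
  have hmat := congrArg (Units.val) hnat
  rw [map_pow, Units.val_pow_eq_pow_val, hc, smul_pow, one_pow, Units.val_one] at hmat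
  have h00 : ((q^3)^(k.natAbs) : LaurentPolynomial ℤ) = 1 := by
    simpa [Matrix.smul_apply, Matrix.one_apply] using congrFun (congrFun hmat 0) 0
  have hq : ((q^3)^(k.natAbs) : LaurentPolynomial ℤ) = T ((k.natAbs : ℤ) * 3) := by
    rw [q, T_pow, T_pow]
    norm_num
  rw [hq, T_eq_one_iff] at h00
  have hk0 : k = 0 := by
    have : k.natAbs = 0 := by omega
    omega
  rw [hk0, zpow_zero]
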